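/- For the superoperators E = H∘H and E' = HZ∘ZH on ℂ², the ordinary diamond norm ‖E − E'‖_⋄ equals 1. -/

import Mathlib

open Matrix ComplexOrder Kronecker

/-- The trace norm of a complex matrix: the trace of `√(Aᴴ * A)`. -/
noncomputable def traceNorm {n : Type*} [Fintype n] [DecidableEq n]
    (A : Matrix n n ℂ) : ℝ :=
  ((Matrix.posSemidef_conjTranspose_mul_self A).1.eigenvectorUnitary.1 *
    diagonal (((↑) : ℝ → ℂ) ∘ Real.sqrt ∘ (Matrix.posSemidef_conjTranspose_mul_self A).1.eigenvalues) *
    (star (Matrix.posSemidef_conjTranspose_mul_self A).1.eigenvectorUnitary :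
      Matrix n n ℂ)).trace.re

/-- The extension `Φ ⊗ id_k` of a superoperator `Φ` to a system enlarged
by an ancilla indexed by `k`: it acts blockwise on the `n`-indices. -/
noncomputable def tensorExt {n : Type*} [Fintype n]
    (Φ : Matrix n n ℂ →ₗ[ℂ] Matrix n n ℂ) (k : Type*)
    (M : Matrix (n × k) (n × k) ℂ) : Matrix (n × k) (n × k) ℂ :=
  fun p q => Φ (Matrix.of fun i j => M (i, p.2) (j, q.2)) p.1 q.1

/-- The `(Q, λ)`-diamond norm of the difference superoperator `Φ = E - E'`:
the supremum over density operators `ρ` on `H ⊗ H` with `tr((Q ⊗ I) ρ) ≥ λ`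
of the trace distance `½‖(Φ ⊗ id)(ρ)‖₁`. -/
noncomputable def QDiamond {n : Type*} [Fintype n] [DecidableEq n]
    (Q : Matrix n n ℂ) (lam : ℝ)
    (Φ : Matrix n n ℂ →ₗ[ℂ] Matrix n n ℂ) : ℝ :=
  sSup {x : ℝ | ∃ ρ : Matrix (n × n) (n × n) ℂ, ρ.PosSemidef ∧ ρ.trace = 1 ∧
      lam ≤ (((Q ⊗ₖ (1 : Matrix n n ℂ)) * ρ).trace).re ∧
      x = (1 / 2) * traceNorm (tensorExt Φ n ρ)}

/-- Conjugation by a matrix `U`, as a superoperator `ρ ↦ U ρ Uᴴ`. -/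
noncomputable def conjMap {n : Type*} [Fintype n] (U : Matrix n n ℂ) :
    Matrix n n ℂ →ₗ[ℂ] Matrix n n ℂ where
  toFun ρ := U * ρ * Uᴴ
  map_add' x y := by simp [Matrix.mul_add, Matrix.add_mul]
  map_smul' c x := by simp [Matrix.mul_smul, Matrix.smul_mul]

/-- The ordinary diamond norm: the `(Q,λ)`-diamond norm with trivial
precondition `Q = I`, `λ = 0`. -/
noncomputable def Diamond {n : Type*} [Fintype n] [DecidableEq n]
    (Φ : Matrix n n ℂ →ₗ[ℂ] Matrix n n ℂ) : ℝ :=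
  QDiamond (1 : Matrix n n ℂ) 0 Φ

/-- The Hadamard gate. -/
noncomputable def Hgate : Matrix (Fin 2) (Fin 2) ℂ :=
  ((Real.sqrt 2 : ℂ))⁻¹ • !![1, 1; 1, -1]

/-- The Pauli-Z gate. -/
def Zgate : Matrix (Fin 2) (Fin 2) ℂ := !![1, 0; 0, -1]

/-! ### Auxiliary lemmas -/

open scoped MatrixOrder in
lemma my_traceNorm_eq {n : Type*} [Fintype n] [DecidableEq n] {A S : Matrix n n ℂ}
    (hS : S.PosSemidef) (h : S ^ 2 = Aᴴ * A) : traceNorm A = S.trace.re := by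
  have hS0 : 0 ≤ S := hS.nonneg
  have e1 : S = cfc Real.sqrt (Aᴴ * A) := by
    rw [← h, ← cfcₙ_eq_cfc, ← CFC.sqrt_eq_real_sqrt _ (by rw [h]; exact (posSemidef_conjTranspose_mul_self A).nonneg), CFC.sqrt_sq S]
  rw [traceNorm, e1, IsHermitian.cfc_eq (posSemidef_conjTranspose_mul_self A).1,
    IsHermitian.cfc, Unitary.conjStarAlgAut_apply]
  rfl

lemma psd_diag {n : Type*} [Fintype n] [DecidableEq n] {P : Matrix n n ℂ}
    (hP : P.PosSemidef) (i : n) : 0 ≤ (P i i).re ∧ (P i i).im = 0 := by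
  have h := hP.dotProduct_mulVec_nonneg (Pi.single i 1)
  have : star (Pi.single i 1 : n → ℂ) ⬝ᵥ P *ᵥ Pi.single i 1 = P i i := by
    simp [dotProduct, mulVec, Pi.single_apply, Finset.mul_sum]
  rw [this] at h
  simpa using ⟨(Complex.le_def.mp h).1, ((Complex.le_def.mp h).2).symm⟩
lemma traceNorm_sub_le {n : Type*} [Fintype n] [DecidableEq n] {X Y : Matrix n n ℂ}
    (hX : X.PosSemidef) (hY : Y.PosSemidef) :
    traceNorm (X - Y) ≤ X.trace.re + Y.trace.re := by
  have hM : (X - Y).IsHermitian := hX.1.sub hY.1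
  set U : Matrix n n ℂ := (hM.eigenvectorUnitary : Matrix n n ℂ) with hU
  have hUU : star U * U = 1 := by
    rw [hU, ← Unitary.coe_star]; exact Unitary.coe_star_mul_self _
  have hUU' : U * star U = 1 := by
    rw [hU, ← Unitary.coe_star]; exact Unitary.coe_mul_star_self _
  set lam := hM.eigenvalues with hlam
  set D : Matrix n n ℂ := diagonal (fun i => Complex.ofReal |lam i|) with hD
  set D0 : Matrix n n ℂ := diagonal (Complex.ofReal ∘ lam) with hD0
  set S : Matrix n n ℂ := U * D * star U with hSdef
  have hDpsd : D.PosSemidef := by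
    refine posSemidef_diagonal_iff.mpr fun i => ?_
    rw [Complex.le_def]
    simp [abs_nonneg]
  have hS : S.PosSemidef := by
    have := hDpsd.mul_mul_conjTranspose_same U
    simpa [Matrix.star_eq_conjTranspose, hSdef] using this
  have key : star U * (X - Y) * U = D0 := by
    have hs : X - Y = U * D0 * star U := by
      have := hM.spectral_theorem
      rw [Unitary.conjStarAlgAut_apply] at this
      exact this
    rw [hs, ← mul_assoc, ← mul_assoc, hUU, one_mul, mul_assoc, hUU, mul_one]
  have hDD : D * D = D0 * D0 := by
    rw [hD, hD0, diagonal_mul_diagonal, diagonal_mul_diagonal]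
    ext i
    simp [← Complex.ofReal_mul, abs_mul_abs_self]
  have hSq : S ^ 2 = (X - Y)ᴴ * (X - Y) := by
    have hspec : X - Y = U * D0 * star U := by
      have := hM.spectral_theorem
      rw [Unitary.conjStarAlgAut_apply] at this
      exact this
    rw [hM.eq, pow_two, hSdef, hspec]
    calc U * D * star U * (U * D * star U)
        = U * (D * (star U * U) * D) * star U := by noncomm_ring
      _ = U * (D0 * (star U * U) * D0) * star U := by rw [hUU]; simp [hDD]
      _ = U * D0 * star U * (U * D0 * star U) := by noncomm_ring
  rw [my_traceNorm_eq hS hSq]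
  have htrS : S.trace = ∑ i, Complex.ofReal |lam i| := by
    rw [hSdef, Matrix.trace_mul_cycle, hUU, one_mul, hD, trace_diagonal]
  have hXc : (star U * X * U).PosSemidef := by
    have := hX.conjTranspose_mul_mul_same U
    simpa [Matrix.star_eq_conjTranspose] using this
  have hYc : (star U * Y * U).PosSemidef := by
    have := hY.conjTranspose_mul_mul_same U
    simpa [Matrix.star_eq_conjTranspose] using this
  have hdiff : ∀ i, ((star U * X * U) i i).re - ((star U * Y * U) i i).re = lam i := by
    intro i
    have h2 : star U * X * U - star U * Y * U = star U * (X - Y) * U := by noncomm_ring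
    have h3 : (star U * X * U - star U * Y * U) i i = Complex.ofReal (lam i) := by
      rw [h2, key, hD0]; simp
    have := congrArg Complex.re h3
    simpa [Matrix.sub_apply] using this
  have hbound : ∀ i, |lam i| ≤ ((star U * X * U) i i).re + ((star U * Y * U) i i).re := by
    intro i
    have hx := (psd_diag hXc i).1
    have hy := (psd_diag hYc i).1
    have := hdiff i
    rw [abs_le]
    constructor <;> linarith
  have htrX : ∑ i, ((star U * X * U) i i).re = X.trace.re := by
    have h4 : (star U * X * U).trace = X.trace := by
      rw [Matrix.trace_mul_cycle, hUU', one_mul]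
    rw [← h4, Matrix.trace]
    simp [Matrix.diag]
  have htrY : ∑ i, ((star U * Y * U) i i).re = Y.trace.re := by
    have h4 : (star U * Y * U).trace = Y.trace := by
      rw [Matrix.trace_mul_cycle, hUU', one_mul]
    rw [← h4, Matrix.trace]
    simp [Matrix.diag]
  calc S.trace.re = ∑ i, |lam i| := by rw [htrS]; simp
    _ ≤ ∑ i, (((star U * X * U) i i).re + ((star U * Y * U) i i).re) :=
        Finset.sum_le_sum fun i _ => hbound i
    _ = X.trace.re + Y.trace.re := by rw [Finset.sum_add_distrib, htrX, htrY]
lemma kron_conjTranspose {m n : Type*} [Fintype m] [Fintype n]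
    (A : Matrix m m ℂ) (B : Matrix n n ℂ) : (A ⊗ₖ B)ᴴ = Aᴴ ⊗ₖ Bᴴ := by
  ext ⟨i, a⟩ ⟨j, b⟩
  simp [conjTranspose_apply, kroneckerMap_apply, mul_comm]

lemma tensorExt_sub {n k : Type*} [Fintype n]
    (Φ Ψ : Matrix n n ℂ →ₗ[ℂ] Matrix n n ℂ) (M : Matrix (n × k) (n × k) ℂ) :
    tensorExt (Φ - Ψ) k M = tensorExt Φ k M - tensorExt Ψ k M := by
  ext ⟨i, a⟩ ⟨j, b⟩
  simp [tensorExt, Matrix.sub_apply]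

lemma tensorExt_conjMap {n k : Type*} [Fintype n] [Fintype k] [DecidableEq n] [DecidableEq k]
    (U : Matrix n n ℂ) (M : Matrix (n × k) (n × k) ℂ) :
    tensorExt (conjMap U) k M = (U ⊗ₖ (1 : Matrix k k ℂ)) * M * (U ⊗ₖ (1 : Matrix k k ℂ))ᴴ := by
  ext ⟨i, a⟩ ⟨j, b⟩
  simp only [tensorExt, conjMap, LinearMap.coe_mk, AddHom.coe_mk, Matrix.mul_apply,
    conjTranspose_apply, kroneckerMap_apply, Matrix.of_apply, Fintype.sum_prod_type,
    Matrix.one_apply, mul_ite, ite_mul, mul_zero, zero_mul, mul_one, one_mul,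
    Finset.sum_ite_eq, Finset.sum_ite_eq', Finset.mem_univ, if_true, apply_ite (star : ℂ → ℂ), star_zero,
    star_one]

lemma sqq : Real.sqrt 2 / 2 * (Real.sqrt 2 / 2) = 1/4 * 2 := by
  rw [div_mul_div_comm, Real.mul_self_sqrt (by norm_num)]; norm_num

noncomputable def wB : Matrix (Fin 2 × Fin 2) (Fin 2 × Fin 2) ℂ :=
  fun p q => if p.1 = p.2 ∧ q = (0, 0) then ((Real.sqrt 2 : ℝ) : ℂ)⁻¹ else 0

noncomputable def rho0 : Matrix (Fin 2 × Fin 2) (Fin 2 × Fin 2) ℂ := wB * wBᴴ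

lemma rho0_apply : rho0 = fun p q => if p.1 = p.2 ∧ q.1 = q.2 then (1/2 : ℂ) else 0 := by
  ext ⟨i, a⟩ ⟨j, b⟩
  simp only [rho0, wB, Matrix.mul_apply, conjTranspose_apply, Fintype.sum_prod_type,
    Fin.sum_univ_two]
  fin_cases i <;> fin_cases a <;> fin_cases j <;> fin_cases b <;>
    norm_num [Prod.ext_iff, Complex.ext_iff, sqq]

noncomputable def Nmat : Matrix (Fin 2 × Fin 2) (Fin 2 × Fin 2) ℂ := fun p q =>
  if p.2 = q.2 then 0 else
  if p.2 = 0 then (if q.1 = 0 then 1/2 else -(1/2)) else (if p.1 = 0 then 1/2 else -(1/2))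

lemma tensorExt_rho0 :
    tensorExt (conjMap Hgate - conjMap (Hgate * Zgate)) (Fin 2) rho0 = Nmat := by
  ext ⟨i, a⟩ ⟨j, b⟩
  simp only [tensorExt, Nmat, LinearMap.sub_apply, conjMap, LinearMap.coe_mk, AddHom.coe_mk,
    Matrix.sub_apply, rho0_apply, Hgate, Zgate, Matrix.mul_apply, Fin.sum_univ_two,
    conjTranspose_apply, Matrix.of_apply, Matrix.smul_apply, smul_eq_mul]
  fin_cases i <;> fin_cases a <;> fin_cases j <;> fin_cases b <;>
    norm_num [Complex.ext_iff, sqq] <;>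
    nlinarith [Real.sq_sqrt (show (0:ℝ) ≤ 2 by norm_num), Real.sqrt_nonneg 2]

noncomputable def Pmat : Matrix (Fin 2 × Fin 2) (Fin 2 × Fin 2) ℂ := fun p q =>
  if p.2 = q.2 then
    (if p.2 = 0 then 1/2 else (if p.1 = q.1 then 1/2 else -(1/2)))
  else 0

lemma NN_eq_P : Nmatᴴ * Nmat = Pmat := by
  ext ⟨i, a⟩ ⟨j, b⟩
  simp only [Nmat, Pmat, Matrix.mul_apply, conjTranspose_apply, Fintype.sum_prod_type,
    Fin.sum_univ_two]
  fin_cases i <;> fin_cases a <;> fin_cases j <;> fin_cases b <;> norm_num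

lemma P_idem : Pmat ^ 2 = Nmatᴴ * Nmat := by
  rw [NN_eq_P, pow_two]
  ext ⟨i, a⟩ ⟨j, b⟩
  simp only [Pmat, Matrix.mul_apply, Fintype.sum_prod_type, Fin.sum_univ_two]
  fin_cases i <;> fin_cases a <;> fin_cases j <;> fin_cases b <;> norm_num

lemma P_trace : Pmat.trace = 2 := by
  simp only [Matrix.trace, Matrix.diag, Fintype.sum_prod_type, Fin.sum_univ_two, Pmat]
  norm_num

lemma rho0_trace : rho0.trace = 1 := by
  rw [rho0_apply]
  simp only [Matrix.trace, Matrix.diag, Fintype.sum_prod_type, Fin.sum_univ_two]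
  norm_num

lemma unit_trace_conj {U : Matrix (Fin 2) (Fin 2) ℂ} (hU : Uᴴ * U = 1)
    (ρ : Matrix (Fin 2 × Fin 2) (Fin 2 × Fin 2) ℂ) :
    ((U ⊗ₖ (1 : Matrix (Fin 2) (Fin 2) ℂ)) * ρ * (U ⊗ₖ (1 : Matrix (Fin 2) (Fin 2) ℂ))ᴴ).trace
      = ρ.trace := by
  rw [Matrix.trace_mul_cycle, kron_conjTranspose, ← mul_kronecker_mul, hU,
    conjTranspose_one, one_mul, Matrix.one_kronecker_one, one_mul]

lemma Hunit : Hgateᴴ * Hgate = 1 := by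
  ext i j
  fin_cases i <;> fin_cases j <;>
    simp [Hgate, Matrix.mul_apply, Fin.sum_univ_two, Matrix.one_apply, Complex.ext_iff] <;>
    norm_num [sqq]

lemma HZunit : (Hgate * Zgate)ᴴ * (Hgate * Zgate) = 1 := by
  rw [conjTranspose_mul, mul_assoc, ← mul_assoc Hgateᴴ, Hunit, one_mul]
  ext i j
  fin_cases i <;> fin_cases j <;>
    simp [Zgate, Matrix.mul_apply, Fin.sum_univ_two, Matrix.one_apply]

lemma diamond_bound :
    ∀ x ∈ {x : ℝ | ∃ ρ : Matrix (Fin 2 × Fin 2) (Fin 2 × Fin 2) ℂ,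
      ρ.PosSemidef ∧ ρ.trace = 1 ∧
      (0:ℝ) ≤ ((((1 : Matrix (Fin 2) (Fin 2) ℂ) ⊗ₖ (1 : Matrix (Fin 2) (Fin 2) ℂ)) * ρ).trace).re ∧
      x = (1 / 2) * traceNorm (tensorExt (conjMap Hgate - conjMap (Hgate * Zgate)) (Fin 2) ρ)},
      x ≤ 1 := by
  rintro x ⟨ρ, hρ, htr, -, rfl⟩
  set A : Matrix (Fin 2 × Fin 2) (Fin 2 × Fin 2) ℂ := Hgate ⊗ₖ (1 : Matrix (Fin 2) (Fin 2) ℂ)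
  set B : Matrix (Fin 2 × Fin 2) (Fin 2 × Fin 2) ℂ :=
    (Hgate * Zgate) ⊗ₖ (1 : Matrix (Fin 2) (Fin 2) ℂ)
  have hext : tensorExt (conjMap Hgate - conjMap (Hgate * Zgate)) (Fin 2) ρ
      = A * ρ * Aᴴ - B * ρ * Bᴴ := by
    rw [tensorExt_sub, tensorExt_conjMap, tensorExt_conjMap]
  have hX : (A * ρ * Aᴴ).PosSemidef := hρ.mul_mul_conjTranspose_same A
  have hY : (B * ρ * Bᴴ).PosSemidef := hρ.mul_mul_conjTranspose_same B
  have htX : (A * ρ * Aᴴ).trace = 1 := by rw [unit_trace_conj Hunit, htr]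
  have htY : (B * ρ * Bᴴ).trace = 1 := by rw [unit_trace_conj HZunit, htr]
  have := traceNorm_sub_le hX hY
  rw [htX, htY] at this
  rw [hext]
  simp only [Complex.one_re] at this
  linarith

/-- For `E = H∘H` and `E' = HZ∘ZH`, the ordinary diamond norm equals 1. -/
theorem diamond_H_HZ :
    Diamond (conjMap Hgate - conjMap (Hgate * Zgate)) = 1 := by
  rw [Diamond, QDiamond]
  have hmem : (1:ℝ) ∈ {x : ℝ | ∃ ρ : Matrix (Fin 2 × Fin 2) (Fin 2 × Fin 2) ℂ,
      ρ.PosSemidef ∧ ρ.trace = 1 ∧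
      (0:ℝ) ≤ ((((1 : Matrix (Fin 2) (Fin 2) ℂ) ⊗ₖ (1 : Matrix (Fin 2) (Fin 2) ℂ)) * ρ).trace).re ∧
      x = (1 / 2) * traceNorm (tensorExt (conjMap Hgate - conjMap (Hgate * Zgate)) (Fin 2) ρ)} := by
    refine ⟨rho0, posSemidef_self_mul_conjTranspose wB, rho0_trace, ?_, ?_⟩
    · rw [Matrix.one_kronecker_one, one_mul, rho0_trace]; norm_num
    · have hPpsd : Pmat.PosSemidef := NN_eq_P ▸ posSemidef_conjTranspose_mul_self Nmat
      rw [tensorExt_rho0, my_traceNorm_eq hPpsd P_idem, P_trace]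
      norm_num
  exact le_antisymm (Real.sSup_le diamond_bound zero_le_one)
    (le_csSup ⟨1, fun x hx => diamond_bound x hx⟩ hmem)
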